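/- Let V = ∇f_i(X) − ∇f_i(X̃) + ∇F(X̃) with i uniform on {1,…,m}, and let Ω be a subspace containing X, X̃, X*, with ∇F(X*) = 0. Assume E_i‖P_Ω(∇f_i(Z) − ∇f_i(X*))‖_F² ≤ 4(1+δ)(F(Z) − F(X*)) for Z ∈ {X, X̃} and ‖P_Ω(∇F(X̃))‖_F² ≥ (4(1−δ)²/(1+δ))(F(X̃) − F(X*)). Then E_i‖P_Ω(V)‖_F² ≤ 8(1+δ)(F(X) − F(X*)) + (32δ/(1+δ))(F(X̃) − F(X*)). -/
import Mathlib


noncomputable section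

open Finset

/-- Frobenius inner product on real matrices. -/
def finner {n₁ n₂ : ℕ} (X Y : Matrix (Fin n₁) (Fin n₂) ℝ) : ℝ :=
  ∑ i, ∑ j, X i j * Y i j

/-- Frobenius norm on real matrices. -/
def fnorm {n₁ n₂ : ℕ} (X : Matrix (Fin n₁) (Fin n₂) ℝ) : ℝ :=
  Real.sqrt (finner X X)

variable {n₁ n₂ : ℕ}

lemma finner_add_left (A B C : Matrix (Fin n₁) (Fin n₂) ℝ) :
    finner (A + B) C = finner A C + finner B C := by
  simp [finner, Matrix.add_apply, add_mul, Finset.sum_add_distrib]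

lemma finner_sub_left (A B C : Matrix (Fin n₁) (Fin n₂) ℝ) :
    finner (A - B) C = finner A C - finner B C := by
  simp [finner, Matrix.sub_apply, sub_mul, Finset.sum_sub_distrib]

lemma finner_comm (A B : Matrix (Fin n₁) (Fin n₂) ℝ) :
    finner A B = finner B A := by
  simp [finner, mul_comm]

lemma finner_smul_left (c : ℝ) (A B : Matrix (Fin n₁) (Fin n₂) ℝ) :
    finner (c • A) B = c * finner A B := by
  simp [finner, Matrix.smul_apply, mul_assoc, Finset.mul_sum]

lemma finner_sum_left {k : ℕ} (W : Fin k → Matrix (Fin n₁) (Fin n₂) ℝ)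
    (B : Matrix (Fin n₁) (Fin n₂) ℝ) :
    finner (∑ i, W i) B = ∑ i, finner (W i) B := by
  exact map_sum (AddMonoidHom.mk' (fun A => finner A B)
    (fun A C => finner_add_left A C B)) W Finset.univ

lemma finner_self_nonneg (A : Matrix (Fin n₁) (Fin n₂) ℝ) : 0 ≤ finner A A :=
  Finset.sum_nonneg fun _ _ => Finset.sum_nonneg fun _ _ => mul_self_nonneg _

lemma fnorm_sq (A : Matrix (Fin n₁) (Fin n₂) ℝ) : fnorm A ^ 2 = finner A A := by
  rw [fnorm, Real.sq_sqrt (finner_self_nonneg A)]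

lemma finner_add_right (A B C : Matrix (Fin n₁) (Fin n₂) ℝ) :
    finner A (B + C) = finner A B + finner A C := by
  rw [finner_comm, finner_add_left, finner_comm B, finner_comm C]

lemma finner_sub_right (A B C : Matrix (Fin n₁) (Fin n₂) ℝ) :
    finner A (B - C) = finner A B - finner A C := by
  rw [finner_comm, finner_sub_left, finner_comm B, finner_comm C]

lemma sq_add_le (A B : Matrix (Fin n₁) (Fin n₂) ℝ) :
    fnorm (A + B) ^ 2 ≤ 2 * fnorm A ^ 2 + 2 * fnorm B ^ 2 := by
  have h := finner_self_nonneg (A - B)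
  rw [finner_sub_left, finner_sub_right, finner_sub_right, finner_comm B A] at h
  rw [fnorm_sq, fnorm_sq, fnorm_sq, finner_add_left, finner_add_right, finner_add_right,
    finner_comm B A]
  linarith

theorem stmt_9 {n₁ n₂ m : ℕ} (hm : 0 < m) (δ : ℝ) (hδ0 : 0 ≤ δ) (hδ1 : δ < 1)
    (g : Fin m → Matrix (Fin n₁) (Fin n₂) ℝ → Matrix (Fin n₁) (Fin n₂) ℝ)
    (GF : Matrix (Fin n₁) (Fin n₂) ℝ → Matrix (Fin n₁) (Fin n₂) ℝ)
    (hGF : ∀ Z, GF Z = (1 / (m : ℝ)) • ∑ i, g i Z)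
    (F : Matrix (Fin n₁) (Fin n₂) ℝ → ℝ)
    (X Xtil Xstar : Matrix (Fin n₁) (Fin n₂) ℝ)
    (Ω : Submodule ℝ (Matrix (Fin n₁) (Fin n₂) ℝ))
    (hX : X ∈ Ω) (hXtil : Xtil ∈ Ω) (hXstar : Xstar ∈ Ω)
    (P : Matrix (Fin n₁) (Fin n₂) ℝ →ₗ[ℝ] Matrix (Fin n₁) (Fin n₂) ℝ)
    (hPmem : ∀ Z, P Z ∈ Ω) (hPid : ∀ Z ∈ Ω, P Z = Z)
    (hPsa : ∀ Z W, finner (P Z) W = finner Z (P W))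
    (hcrit : GF Xstar = 0)
    (hbound : ∀ Z ∈ ({X, Xtil} : Set (Matrix (Fin n₁) (Fin n₂) ℝ)),
      (1 / (m : ℝ)) * ∑ i, fnorm (P (g i Z - g i Xstar)) ^ 2 ≤
        4 * (1 + δ) * (F Z - F Xstar))
    (hlow : fnorm (P (GF Xtil)) ^ 2 ≥
      (4 * (1 - δ) ^ 2 / (1 + δ)) * (F Xtil - F Xstar))
    (V : Fin m → Matrix (Fin n₁) (Fin n₂) ℝ)
    (hV : ∀ i, V i = g i X - g i Xtil + GF Xtil) :
    (1 / (m : ℝ)) * ∑ i, fnorm (P (V i)) ^ 2 ≤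
      8 * (1 + δ) * (F X - F Xstar) +
        (32 * δ / (1 + δ)) * (F Xtil - F Xstar) := by
  have hm0 : (0:ℝ) < (m:ℝ) := by exact_mod_cast hm
  have hm0' : (m:ℝ) ≠ 0 := ne_of_gt hm0
  have h1δ : (0:ℝ) < 1 + δ := by linarith
  set U : Fin m → Matrix (Fin n₁) (Fin n₂) ℝ := fun i => P (g i X - g i Xstar) with hU
  set W : Fin m → Matrix (Fin n₁) (Fin n₂) ℝ := fun i => P (g i Xtil - g i Xstar) with hW
  set Wb : Matrix (Fin n₁) (Fin n₂) ℝ := P (GF Xtil) with hWb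
  -- the mean of W is Wb
  have hsumW : ∑ i, W i = (m : ℝ) • Wb := by
    have h1 : ∑ i, W i = P (∑ i, (g i Xtil - g i Xstar)) := (map_sum P _ _).symm
    have h2 : (1 / (m:ℝ)) • ∑ i, (g i Xtil - g i Xstar) = GF Xtil := by
      rw [Finset.sum_sub_distrib, smul_sub, ← hGF, ← hGF, hcrit, sub_zero]
    rw [h1, hWb, ← h2, map_smul, smul_smul]
    rw [mul_one_div, div_self hm0', one_smul]
  -- decomposition of P (V i)
  have hPV : ∀ i, P (V i) = U i + (Wb - W i) := by
    intro i
    have : V i = (g i X - g i Xstar) + (GF Xtil - (g i Xtil - g i Xstar)) := by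
      rw [hV]; abel
    rw [this]
    simp only [hU, hW, hWb, map_add, map_sub]
  -- pointwise bound
  have step1 : ∀ i, fnorm (P (V i)) ^ 2 ≤ 2 * fnorm (U i) ^ 2 + 2 * fnorm (Wb - W i) ^ 2 := by
    intro i; rw [hPV i]; exact sq_add_le _ _
  -- variance identity
  have hvar : ∑ i, fnorm (Wb - W i) ^ 2 = ∑ i, fnorm (W i) ^ 2 - (m:ℝ) * fnorm Wb ^ 2 := by
    have expand : ∀ i, fnorm (Wb - W i) ^ 2 =
        fnorm Wb ^ 2 - 2 * finner Wb (W i) + fnorm (W i) ^ 2 := by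
      intro i
      rw [fnorm_sq, fnorm_sq, fnorm_sq, finner_sub_left, finner_sub_right, finner_sub_right,
        finner_comm (W i) Wb]
      ring
    have hdot : ∑ i, finner Wb (W i) = (m:ℝ) * fnorm Wb ^ 2 := by
      have : finner (∑ i, W i) Wb = ∑ i, finner (W i) Wb := finner_sum_left W Wb
      rw [hsumW, finner_smul_left] at this
      calc ∑ i, finner Wb (W i) = ∑ i, finner (W i) Wb := by
            simp_rw [finner_comm Wb]
        _ = (m:ℝ) * finner Wb Wb := this.symm
        _ = (m:ℝ) * fnorm Wb ^ 2 := by rw [fnorm_sq]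
    simp_rw [expand]
    rw [Finset.sum_add_distrib, Finset.sum_sub_distrib, Finset.sum_const, Finset.card_univ,
      Fintype.card_fin, ← Finset.mul_sum, hdot]
    push_cast
    ring
  -- bounds from hypotheses
  have hbX : (1 / (m : ℝ)) * ∑ i, fnorm (U i) ^ 2 ≤ 4 * (1 + δ) * (F X - F Xstar) :=
    hbound X (Set.mem_insert _ _)
  have hbXt : (1 / (m : ℝ)) * ∑ i, fnorm (W i) ^ 2 ≤ 4 * (1 + δ) * (F Xtil - F Xstar) :=
    hbound Xtil (Set.mem_insert_of_mem _ rfl)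
  -- combine
  have hsum : ∑ i, fnorm (P (V i)) ^ 2 ≤
      2 * ∑ i, fnorm (U i) ^ 2 + 2 * ∑ i, fnorm (Wb - W i) ^ 2 := by
    calc ∑ i, fnorm (P (V i)) ^ 2
        ≤ ∑ i, (2 * fnorm (U i) ^ 2 + 2 * fnorm (Wb - W i) ^ 2) :=
          Finset.sum_le_sum fun i _ => step1 i
      _ = 2 * ∑ i, fnorm (U i) ^ 2 + 2 * ∑ i, fnorm (Wb - W i) ^ 2 := by
          rw [Finset.sum_add_distrib, Finset.mul_sum, Finset.mul_sum]
  have key : (1 / (m : ℝ)) * ∑ i, fnorm (P (V i)) ^ 2 ≤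
      2 * ((1 / (m : ℝ)) * ∑ i, fnorm (U i) ^ 2) +
      2 * ((1 / (m : ℝ)) * ∑ i, fnorm (W i) ^ 2) - 2 * fnorm Wb ^ 2 := by
    have h := mul_le_mul_of_nonneg_left hsum (le_of_lt (by positivity : (0:ℝ) < 1 / (m:ℝ)))
    rw [hvar] at h
    have : (1 / (m:ℝ)) * ((m:ℝ) * fnorm Wb ^ 2) = fnorm Wb ^ 2 := by
      field_simp
    nlinarith [this, h]
  have hlow' : (4 * (1 - δ) ^ 2 / (1 + δ)) * (F Xtil - F Xstar) ≤ fnorm Wb ^ 2 := hlow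
  calc (1 / (m : ℝ)) * ∑ i, fnorm (P (V i)) ^ 2
      ≤ 2 * (4 * (1 + δ) * (F X - F Xstar)) + 2 * (4 * (1 + δ) * (F Xtil - F Xstar))
        - 2 * ((4 * (1 - δ) ^ 2 / (1 + δ)) * (F Xtil - F Xstar)) := by linarith
    _ = 8 * (1 + δ) * (F X - F Xstar) + (32 * δ / (1 + δ)) * (F Xtil - F Xstar) := by
        field_simp
        ring
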